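/- Let π be the bivector field on ℝ⁴ with coordinates (x₁,y₁,x₂,y₂) defined by π = (x₂²+y₂²) ∂x₁∧∂y₁ + (x₁²+y₁²) ∂x₂∧∂y₂ + (-y₁y₂-x₁x₂) ∂x₁∧∂y₂ + (x₁x₂+y₁y₂) ∂y₁∧∂x₂ + (-x₁y₂+y₁x₂) ∂y₁∧∂y₂ + (-x₁y₂+y₁x₂) ∂x₁∧∂x₂. Then π satisfies the Jacobi identity, i.e. for all i,j,l: Σₛ (π^{sl} ∂ₛπ^{ij} + π^{si} ∂ₛπ^{jl} + π^{sj} ∂ₛπ^{li}) = 0, where π^{ij} are the coefficient functions of π. -/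

import Mathlib

/-- Partial derivative of `f : ℝ⁴ → ℝ` in the `s`-th coordinate direction at `q`. -/
noncomputable def pd (s : Fin 4) (f : (Fin 4 → ℝ) → ℝ) (q : Fin 4 → ℝ) : ℝ :=
  fderiv ℝ f q (Pi.single s 1)

/-- The Lefschetz-model bivector on ℝ⁴ with coordinates (x₁,y₁,x₂,y₂) = (q 0, q 1, q 2, q 3),
as an antisymmetric matrix of coefficient functions. -/
noncomputable def lefPi (q : Fin 4 → ℝ) : Matrix (Fin 4) (Fin 4) ℝ :=
  !![0,                      q 2 ^ 2 + q 3 ^ 2,      -(q 0) * q 3 + q 1 * q 2, -(q 1) * q 3 - q 0 * q 2;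
     -(q 2 ^ 2 + q 3 ^ 2),   0,                      q 0 * q 2 + q 1 * q 3,    -(q 0) * q 3 + q 1 * q 2;
     q 0 * q 3 - q 1 * q 2,  -(q 0 * q 2 + q 1 * q 3), 0,                      q 0 ^ 2 + q 1 ^ 2;
     q 1 * q 3 + q 0 * q 2,  q 0 * q 3 - q 1 * q 2,   -(q 0 ^ 2 + q 1 ^ 2),    0]

lemma pd_coord (s i : Fin 4) (q : Fin 4 → ℝ) :
    pd s (fun x : Fin 4 → ℝ => x i) q = if i = s then 1 else 0 := by
  have h : fderiv ℝ (fun x : Fin 4 → ℝ => x i) q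
      = (ContinuousLinearMap.proj i : (Fin 4 → ℝ) →L[ℝ] ℝ) :=
    (ContinuousLinearMap.proj i : (Fin 4 → ℝ) →L[ℝ] ℝ).fderiv
  simp [pd, h, Pi.single_apply]

lemma pd_zero (s : Fin 4) (q : Fin 4 → ℝ) : pd s (fun _ : Fin 4 → ℝ => (0:ℝ)) q = 0 := by
  simp [pd]

lemma pd_add {f g : (Fin 4 → ℝ) → ℝ} {q : Fin 4 → ℝ} (s : Fin 4)
    (hf : DifferentiableAt ℝ f q) (hg : DifferentiableAt ℝ g q) :
    pd s (fun x => f x + g x) q = pd s f q + pd s g q := by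
  simp [pd, fderiv_fun_add hf hg]

lemma pd_sub {f g : (Fin 4 → ℝ) → ℝ} {q : Fin 4 → ℝ} (s : Fin 4)
    (hf : DifferentiableAt ℝ f q) (hg : DifferentiableAt ℝ g q) :
    pd s (fun x => f x - g x) q = pd s f q - pd s g q := by
  simp [pd, fderiv_fun_sub hf hg]

lemma pd_neg {f : (Fin 4 → ℝ) → ℝ} {q : Fin 4 → ℝ} (s : Fin 4) :
    pd s (fun x => -f x) q = -pd s f q := by
  simp [pd, fderiv_neg]

lemma pd_mul {f g : (Fin 4 → ℝ) → ℝ} {q : Fin 4 → ℝ} (s : Fin 4)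
    (hf : DifferentiableAt ℝ f q) (hg : DifferentiableAt ℝ g q) :
    pd s (fun x => f x * g x) q = pd s f q * g q + f q * pd s g q := by
  simp [pd, fderiv_fun_mul hf hg]; ring

set_option maxHeartbeats 4000000 in
/-- The Lefschetz-model bivector satisfies the Jacobi identity in coordinates. -/
theorem lefPi_jacobi :
    ∀ (q : Fin 4 → ℝ) (i j l : Fin 4),
      ∑ s : Fin 4,
        (lefPi q s l * pd s (fun x => lefPi x i j) q +
         lefPi q s i * pd s (fun x => lefPi x j l) q +
         lefPi q s j * pd s (fun x => lefPi x l i) q) = 0 := by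
  intro q i j l
  fin_cases i <;> fin_cases j <;> fin_cases l <;>
  · simp only [Fin.reduceFinMk, Fin.zero_eta, Fin.mk_one]
    simp only [Fin.sum_univ_four, lefPi, pow_two, Matrix.of_apply,
      Matrix.cons_val', Matrix.cons_val_zero, Matrix.cons_val_one, Matrix.head_cons,
      Matrix.head_fin_const, Matrix.empty_val', Matrix.cons_val_fin_one,
      Matrix.cons_val_two, Matrix.cons_val_three, Matrix.tail_cons]
    simp (disch := fun_prop) only [pd_add, pd_sub, pd_neg, pd_mul, pd_coord, pd_zero]
    try simp only [Fin.reduceEq, reduceIte]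
    ring
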